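/- Let r > 0 and let s, c, α, H be real numbers with s² + c² = 1, s ≠ 0, σ := (1/3)sH + 2cα ≠ 0 and η := (2/3)sH + 2cα ≠ 0. Define the 4×4 matrix a with rows ((−(1/3)cH + 2sα)/(rσ), 0, 0, 0), ((−(1/3)αH)/(srσ), −c/(sr), 0, 0), ((−(10/3)Hα²)/(rση), 0, (−(2/3)cH + 2sα)/(rη), 0), (((4/3)sα²H² + (2/3)cα³H)/(srση), 0, (−(2/3)αH)/(srη), −c/(sr)), and the numbers λ₁ := (−(1/3)cH + 2sα)/(rσ), λ₂ = λ₄ := −c/(sr), λ₃ := (−(2/3)cH + 2sα)/(rη). Then the vectors ξ¹ = (1, −H/6, −5α, (11/6)αH), ξ² = (0,1,0,0), ξ³ = (0,0,1,−H/3), ξ⁴ = (0,0,0,1) satisfy a·ξ¹ = λ₁ξ¹, a·ξ² = λ₂ξ², a·ξ³ = λ₃ξ³, a·ξ⁴ = λ₄ξ⁴, and ξ¹, ξ², ξ³, ξ⁴ are linearly independent; hence a has a complete set of real eigenvectors (the system is hyperbolic). -/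

import Mathlib

set_option maxHeartbeats 1000000 in
/-- the matrix `a = A⁻¹B` of the quasi-linear system has the explicit
eigenvectors `ξ¹ = (1, −H/6, −5α, (11/6)αH)`, `ξ² = (0,1,0,0)`, `ξ³ = (0,0,1,−H/3)`,
`ξ⁴ = (0,0,0,1)` with eigenvalues `λ₁, λ₂, λ₃, λ₄ = λ₂`, and these eigenvectors are
linearly independent; hence `a` has a complete set of real eigenvectors. -/
theorem stmt_13 (r s c α H σ η : ℝ) (hr : 0 < r) (hsc : s ^ 2 + c ^ 2 = 1) (hs : s ≠ 0)
    (hσdef : σ = (1 / 3) * s * H + 2 * c * α) (hηdef : η = (2 / 3) * s * H + 2 * c * α)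
    (hσ : σ ≠ 0) (hη : η ≠ 0)
    (a : Matrix (Fin 4) (Fin 4) ℝ)
    (ha : a = !![(-((1 / 3) * c * H) + 2 * s * α) / (r * σ), 0, 0, 0;
                 (-((1 / 3) * α * H)) / (s * r * σ), -c / (s * r), 0, 0;
                 (-((10 / 3) * H * α ^ 2)) / (r * σ * η), 0,
                   (-((2 / 3) * c * H) + 2 * s * α) / (r * η), 0;
                 ((4 / 3) * s * α ^ 2 * H ^ 2 + (2 / 3) * c * α ^ 3 * H) / (s * r * σ * η),
                   0, (-((2 / 3) * α * H)) / (s * r * η), -c / (s * r)])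
    (lam₁ lam₂ lam₃ lam₄ : ℝ)
    (hlam₁ : lam₁ = (-((1 / 3) * c * H) + 2 * s * α) / (r * σ))
    (hlam₂ : lam₂ = -c / (s * r)) (hlam₄ : lam₄ = -c / (s * r))
    (hlam₃ : lam₃ = (-((2 / 3) * c * H) + 2 * s * α) / (r * η))
    (ξ₁ ξ₂ ξ₃ ξ₄ : Fin 4 → ℝ)
    (hξ₁ : ξ₁ = ![1, -(H / 6), -(5 * α), (11 / 6) * α * H])
    (hξ₂ : ξ₂ = ![0, 1, 0, 0])
    (hξ₃ : ξ₃ = ![0, 0, 1, -(H / 3)])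
    (hξ₄ : ξ₄ = ![0, 0, 0, 1]) :
    a.mulVec ξ₁ = lam₁ • ξ₁ ∧ a.mulVec ξ₂ = lam₂ • ξ₂ ∧ a.mulVec ξ₃ = lam₃ • ξ₃ ∧
      a.mulVec ξ₄ = lam₄ • ξ₄ ∧ LinearIndependent ℝ ![ξ₁, ξ₂, ξ₃, ξ₄] := by
  have hr' : r ≠ 0 := ne_of_gt hr
  have hσ3 : s * H + 2 * c * α * 3 ≠ 0 := by intro h; apply hσ; rw [hσdef]; linarith
  have hη3 : 2 * s * H + 2 * c * α * 3 ≠ 0 := by intro h; apply hη; rw [hηdef]; linarith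
  have hσ4 : H * s + 3 * α * 2 * c ≠ 0 := by intro h; apply hσ3; linarith
  have hσ5 : s * H + 3 * α * 2 * c ≠ 0 := by intro h; apply hσ3; linarith
  have hη4 : H * s + 3 * α * c ≠ 0 := by intro h; apply hη3; linarith
  have hη5 : s * H + 3 * α * c ≠ 0 := by intro h; apply hη3; linarith
  subst ha hlam₁ hlam₂ hlam₃ hlam₄ hξ₁ hξ₂ hξ₃ hξ₄ hσdef hηdef
  refine ⟨?_, ?_, ?_, ?_, ?_⟩
  · funext i
    fin_cases i <;>
      simp [Matrix.mulVec, dotProduct, Fin.sum_univ_four] <;> field_simp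
    · linear_combination (6*α*H) * hsc
    · linear_combination (30*α^2*H) * hsc
    · linear_combination (-(132*α^2*s*H^2 + 396*α^3*c*H)) * hsc
  · funext i
    fin_cases i <;>
      simp [Matrix.mulVec, dotProduct, Fin.sum_univ_four]
  · funext i
    fin_cases i <;>
      simp [Matrix.mulVec, dotProduct, Fin.sum_univ_four] <;> field_simp
    linear_combination (3*α*H) * hsc
  · funext i
    fin_cases i <;>
      simp [Matrix.mulVec, dotProduct, Fin.sum_univ_four]
  · have h : LinearIndependent ℝ (fun i =>
        (Matrix.of ![![(1:ℝ), -(H / 6), -(5 * α), (11 / 6) * α * H],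
          ![0, 1, 0, 0], ![0, 0, 1, -(H / 3)], ![0, 0, 0, 1]]) i) := by
      rw [show (fun i => (Matrix.of ![![(1:ℝ), -(H / 6), -(5 * α), (11 / 6) * α * H],
          ![0, 1, 0, 0], ![0, 0, 1, -(H / 3)], ![0, 0, 0, 1]]) i) = Matrix.row _ from rfl]
      rw [Matrix.linearIndependent_rows_iff_isUnit, Matrix.isUnit_iff_isUnit_det]
      simp [Matrix.det_succ_row_zero, Fin.sum_univ_succ]
    exact h
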